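/- For Gaussian mechanism calibration: if a real-valued query has sensitivity Δ and we release it plus N(0, σ²) noise with σ ≥ Δ·√(2 log(1.25/δ))/ε (with ε ∈ (0,1), δ ∈ (0,1)), then for any two adjacent values a, b with |a−b| ≤ Δ, the privacy loss event has probability bound: P[ |log(φ_{a,σ}(Z)/φ_{b,σ}(Z))| > ε ] ≤ δ where Z ~ N(a, σ²) and φ_{c,σ} is the N(c,σ²) density. -/

import Mathlib

open ProbabilityTheory
open ProbabilityTheory MeasureTheory Real Set
open scoped NNReal ENNReal

-- reflection lemma
lemma gr_neg (μ : ℝ) (v : ℝ≥0) :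
    (gaussianReal μ v).map (fun x : ℝ => -x) = gaussianReal (-μ) v := by
  have h := gaussianReal_map_const_mul (μ := μ) (v := v) (-1)
  simp only [neg_one_mul] at h
  rw [h]
  congr 1
  ext
  simp

lemma gr_Iio (μ x : ℝ) (v : ℝ≥0) :
    gaussianReal μ v (Set.Iio x) = gaussianReal (-μ) v (Set.Ioi (-x)) := by
  rw [← gr_neg μ v, Measure.map_apply measurable_neg measurableSet_Ioi]
  congr 1
  ext y
  simp

lemma gr_Ioi (μ x : ℝ) (v : ℝ≥0) :
    gaussianReal μ v (Set.Ioi x) = gaussianReal (-μ) v (Set.Iio (-x)) := by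
  rw [← gr_neg μ v, Measure.map_apply measurable_neg measurableSet_Iio]
  congr 1
  ext y
  simp

lemma gr_half (μ : ℝ) (v : ℝ≥0) : gaussianReal μ v (Set.Ioi μ) ≤ 1/2 := by
  have hsym : gaussianReal μ v (Set.Ioi μ) = gaussianReal μ v (Set.Iio μ) := by
    rw [gr_Iio]
    have hmap := gaussianReal_map_add_const (μ := -μ) (v := v) (2*μ)
    have : -μ + 2*μ = μ := by ring
    rw [this] at hmap
    rw [← hmap, Measure.map_apply (measurable_id'.add_const _) measurableSet_Ioi]
    congr 1
    ext y
    simp only [Set.mem_preimage, Set.mem_Ioi]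
    constructor <;> intro h <;> linarith
  have hdisj : Disjoint (Set.Ioi μ) (Set.Iio μ) := by
    rw [Set.disjoint_left]
    intro x hx hx'
    exact absurd (lt_trans hx' hx) (lt_irrefl x)
  have hun : gaussianReal μ v (Set.Ioi μ) + gaussianReal μ v (Set.Iio μ) ≤ 1 := by
    rw [← measure_union hdisj measurableSet_Iio]
    · exact prob_le_one
  rw [← hsym] at hun
  by_contra h
  push_neg at h
  have : (1:ℝ≥0∞)/2 + 1/2 < gaussianReal μ v (Set.Ioi μ) + gaussianReal μ v (Set.Ioi μ) := by
    exact ENNReal.add_lt_add h h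
  rw [ENNReal.add_halves] at this
  exact absurd (lt_of_lt_of_le this hun) (lt_irrefl 1)

lemma pdf_shift (μ σ t : ℝ) (hσ : 0 < σ) (ht : 0 ≤ t) (x : ℝ) (hx : μ + t ≤ x) :
    gaussianPDFReal μ (⟨σ^2, sq_nonneg σ⟩ : ℝ≥0) x ≤
      Real.exp (-t^2/(2*σ^2)) * gaussianPDFReal (μ+t) (⟨σ^2, sq_nonneg σ⟩ : ℝ≥0) x := by
  unfold gaussianPDFReal
  push_cast
  have hC : (0:ℝ) ≤ (Real.sqrt (2 * Real.pi * σ^2))⁻¹ := by positivity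
  have hs : 0 < σ^2 := by positivity
  have hexp : Real.exp (-(x-μ)^2/(2*σ^2)) ≤
      Real.exp (-t^2/(2*σ^2)) * Real.exp (-(x-(μ+t))^2/(2*σ^2)) := by
    rw [← Real.exp_add, Real.exp_le_exp, ← add_div, div_le_div_iff₀ (by linarith) (by linarith)]
    nlinarith [mul_nonneg ht (sub_nonneg.mpr hx)]
  refine le_trans (mul_le_mul_of_nonneg_left hexp hC) (le_of_eq (by erw [NNReal.coe_mk]; ring))

lemma tail_Ioi_exp (μ σ t : ℝ) (hσ : 0 < σ) (ht : 0 ≤ t) :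
    gaussianReal μ (⟨σ^2, sq_nonneg σ⟩ : ℝ≥0) (Set.Ioi (μ + t)) ≤
      ENNReal.ofReal (Real.exp (-t^2/(2*σ^2)) / 2) := by
  set v : ℝ≥0 := (⟨σ^2, sq_nonneg σ⟩ : ℝ≥0) with hv
  have hv0 : v ≠ 0 := by
    intro h
    have := congrArg (NNReal.toReal) h
    simp [hv] at this
    nlinarith [show σ^2 = 0 from this]
  rw [gaussianReal_apply _ hv0]
  have hmono : ∫⁻ x in Set.Ioi (μ+t), gaussianPDF μ v x ≤
      ∫⁻ x in Set.Ioi (μ+t), ENNReal.ofReal (Real.exp (-t^2/(2*σ^2))) * gaussianPDF (μ+t) v x := by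
    apply setLIntegral_mono (by exact (measurable_gaussianPDF _ _).const_mul _)
    intro x hx
    unfold gaussianPDF
    rw [← ENNReal.ofReal_mul (le_of_lt (Real.exp_pos _))]
    exact ENNReal.ofReal_le_ofReal (pdf_shift μ σ t hσ ht x (le_of_lt hx))
  refine le_trans hmono ?_
  rw [lintegral_const_mul _ (measurable_gaussianPDF _ _), ← gaussianReal_apply _ hv0]
  calc ENNReal.ofReal (Real.exp (-t^2/(2*σ^2))) * gaussianReal (μ+t) v (Set.Ioi (μ+t))
      ≤ ENNReal.ofReal (Real.exp (-t^2/(2*σ^2))) * (1/2) :=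
        mul_le_mul_right (gr_half (μ+t) v) _
    _ = ENNReal.ofReal (Real.exp (-t^2/(2*σ^2)) / 2) := by
        rw [ENNReal.ofReal_div_of_pos (by norm_num : (0:ℝ) < 2), ENNReal.ofReal_ofNat,
          div_eq_mul_inv, one_div, div_eq_mul_inv]

lemma tail_Iio_exp (μ σ t : ℝ) (hσ : 0 < σ) (ht : 0 ≤ t) :
    gaussianReal μ (⟨σ^2, sq_nonneg σ⟩ : ℝ≥0) (Set.Iio (μ - t)) ≤
      ENNReal.ofReal (Real.exp (-t^2/(2*σ^2)) / 2) := by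
  rw [gr_Iio μ (μ - t) ⟨σ^2, sq_nonneg σ⟩]
  have h : -(μ - t) = -μ + t := by ring
  rw [h]
  exact tail_Ioi_exp (-μ) σ t hσ ht

lemma ofReal_half : ENNReal.ofReal (1/2 : ℝ) = 1/2 := by
  rw [ENNReal.ofReal_div_of_pos (by norm_num : (0:ℝ) < 2), ENNReal.ofReal_one,
    ENNReal.ofReal_ofNat]

lemma tail_Ioi_lin (μ σ t : ℝ) (hσ : 0 < σ) :
    gaussianReal μ (⟨σ^2, sq_nonneg σ⟩ : ℝ≥0) (Set.Ioi (μ + t)) ≤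
      ENNReal.ofReal (1/2 + max 0 (-t) * (Real.sqrt (2*Real.pi*σ^2))⁻¹) := by
  set v : ℝ≥0 := (⟨σ^2, sq_nonneg σ⟩ : ℝ≥0) with hv
  have hv0 : v ≠ 0 := by
    intro h
    have := congrArg (NNReal.toReal) h
    simp [hv] at this
    nlinarith [show σ^2 = 0 from this]
  have hC : (0:ℝ) ≤ (Real.sqrt (2*Real.pi*σ^2))⁻¹ := by positivity
  have hmax : (0:ℝ) ≤ max 0 (-t) * (Real.sqrt (2*Real.pi*σ^2))⁻¹ :=
    mul_nonneg (le_max_left _ _) hC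
  by_cases ht : 0 ≤ t
  · calc gaussianReal μ v (Set.Ioi (μ + t)) ≤ gaussianReal μ v (Set.Ioi μ) :=
          measure_mono (Set.Ioi_subset_Ioi (by linarith))
    _ ≤ 1/2 := gr_half μ v
    _ = ENNReal.ofReal (1/2 : ℝ) := ofReal_half.symm
    _ ≤ _ := ENNReal.ofReal_le_ofReal (by linarith)
  · push_neg at ht
    have hsub : Set.Ioc (μ+t) μ ∪ Set.Ioi μ = Set.Ioi (μ+t) :=
      Set.Ioc_union_Ioi_eq_Ioi (by linarith)
    rw [← hsub]
    refine le_trans (measure_union_le _ _) ?_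
    have h1 : gaussianReal μ v (Set.Ioc (μ+t) μ) ≤
        ENNReal.ofReal (max 0 (-t) * (Real.sqrt (2*Real.pi*σ^2))⁻¹) := by
      rw [gaussianReal_apply _ hv0]
      have hb : ∫⁻ x in Set.Ioc (μ+t) μ, gaussianPDF μ v x ≤
          ∫⁻ _ in Set.Ioc (μ+t) μ, ENNReal.ofReal ((Real.sqrt (2*Real.pi*σ^2))⁻¹) := by
        apply setLIntegral_mono measurable_const
        intro x _
        unfold gaussianPDF gaussianPDFReal
        apply ENNReal.ofReal_le_ofReal
        push_cast
        calc (Real.sqrt (2*Real.pi*σ^2))⁻¹ * Real.exp (-(x-μ)^2/(2*σ^2))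
            ≤ (Real.sqrt (2*Real.pi*σ^2))⁻¹ * 1 := by
              apply mul_le_mul_of_nonneg_left _ hC
              rw [Real.exp_le_one_iff]
              have : (0:ℝ) < 2*σ^2 := by positivity
              apply div_nonpos_of_nonpos_of_nonneg _ (le_of_lt this)
              nlinarith [sq_nonneg (x - μ)]
          _ = (Real.sqrt (2*Real.pi*σ^2))⁻¹ := mul_one _
      refine le_trans hb ?_
      rw [setLIntegral_const, Real.volume_Ioc, ← ENNReal.ofReal_mul (by positivity)]
      apply ENNReal.ofReal_le_ofReal
      have hmax2 : max 0 (-t) = -t := max_eq_right (by linarith)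
      rw [hmax2]
      have : μ - (μ + t) = -t := by ring
      rw [this, mul_comm]
    calc gaussianReal μ v (Set.Ioc (μ+t) μ) + gaussianReal μ v (Set.Ioi μ)
        ≤ ENNReal.ofReal (max 0 (-t) * (Real.sqrt (2*Real.pi*σ^2))⁻¹) + 1/2 :=
          add_le_add h1 (gr_half μ v)
      _ = ENNReal.ofReal (max 0 (-t) * (Real.sqrt (2*Real.pi*σ^2))⁻¹) +
            ENNReal.ofReal (1/2 : ℝ) := by rw [ofReal_half]
      _ = ENNReal.ofReal (max 0 (-t) * (Real.sqrt (2*Real.pi*σ^2))⁻¹ + 1/2) :=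
          (ENNReal.ofReal_add hmax (by norm_num)).symm
      _ = _ := by rw [add_comm (max 0 (-t) * _)]

lemma cosh_half_bound (x : ℝ) (hx0 : 0 ≤ x) (hx1 : x ≤ 1/2) :
    Real.exp x + Real.exp (-x) ≤ 5/2 := by
  have h1 : Real.exp x ≤ Real.exp (1/2) := Real.exp_le_exp.mpr hx1
  have h2 : Real.exp (-x - 1/2) ≤ 1 := Real.exp_le_one_iff.mpr (by linarith)
  have key : 0 ≤ (Real.exp (1/2) - Real.exp x) * (1 - Real.exp (-x - 1/2)) :=
    mul_nonneg (by linarith) (by linarith)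
  have e1 : Real.exp (1/2) * Real.exp (-x - 1/2) = Real.exp (-x) := by
    rw [← Real.exp_add]; ring_nf
  have e2 : Real.exp x * Real.exp (-x - 1/2) = Real.exp (-(1/2) : ℝ) := by
    rw [← Real.exp_add]; ring_nf
  have hmain : Real.exp x + Real.exp (-x) ≤ Real.exp (1/2) + Real.exp (-(1/2) : ℝ) := by
    nlinarith [key, e1, e2]
  have hy : Real.exp (1/2) * Real.exp (-(1/2):ℝ) = 1 := by
    rw [← Real.exp_add]; norm_num
  have hy2 : Real.exp (1/2) * Real.exp (1/2) = Real.exp 1 := by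
    rw [← Real.exp_add]; norm_num
  have he : Real.exp 1 < 2.7182818286 := Real.exp_one_lt_d9
  have hy1 : 1 ≤ Real.exp (1/2) := Real.one_le_exp (by norm_num)
  have hz : 0 < Real.exp (-(1/2):ℝ) := Real.exp_pos _
  nlinarith [hmain, hy, hy2, he, hy1, hz]

lemma log_oneQuarter : (0.2:ℝ) ≤ Real.log 1.25 := by
  have h : Real.exp (0.2:ℝ) ≤ 1.25 := by
    have := Real.add_one_le_exp (-0.2 : ℝ)
    have h2 : (0.8:ℝ) ≤ Real.exp (-0.2:ℝ) := by linarith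
    rw [Real.exp_neg] at h2
    have hp : (0:ℝ) < Real.exp (0.2:ℝ) := Real.exp_pos _
    rw [le_inv_comm₀ (by norm_num) hp] at h2
    linarith [h2]
  rw [show (0.2:ℝ) = Real.log (Real.exp 0.2) from (Real.log_exp _).symm]
  exact Real.log_le_log (Real.exp_pos _) h

lemma exp_quarter_bound : Real.exp (1/4 : ℝ) ≤ 1.2841 := by
  have h4 : Real.exp (1/4:ℝ) ^ 4 = Real.exp 1 := by
    rw [← Real.exp_nat_mul]; norm_num
  have he : Real.exp 1 < 2.7182818286 := Real.exp_one_lt_d9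
  have hp : 0 < Real.exp (1/4:ℝ) := Real.exp_pos _
  nlinarith [h4, he, hp, sq_nonneg (Real.exp (1/4:ℝ) - 1.2841),
    sq_nonneg (Real.exp (1/4:ℝ) + 1.2841), sq_nonneg (Real.exp (1/4:ℝ)^2 - 1.2841^2)]

lemma sqrt_two_pi_ge : (2.5:ℝ) ≤ Real.sqrt (2 * Real.pi) := by
  have hpi : (3.141592:ℝ) < Real.pi := Real.pi_gt_d6
  rw [show (2.5:ℝ) = Real.sqrt (2.5^2) from (Real.sqrt_sq (by norm_num)).symm]
  apply Real.sqrt_le_sqrt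
  nlinarith

set_option maxHeartbeats 2000000 in
lemma helper_tails (a σ ε δ k : ℝ) (hσ : 0 < σ) (hε0 : 0 < ε) (hε1 : ε < 1)
    (hδ0 : 0 < δ) (hδ1 : δ < 1) (hk : Real.sqrt (2 * Real.log (1.25/δ)) ≤ k) :
    gaussianReal a (⟨σ^2, sq_nonneg σ⟩ : ℝ≥0) (Set.Ioi (a + σ*(k - ε/(2*k)))) +
      gaussianReal a (⟨σ^2, sq_nonneg σ⟩ : ℝ≥0) (Set.Iio (a - σ*(k + ε/(2*k)))) ≤
      ENNReal.ofReal δ := by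
  set L := Real.log (1.25/δ) with hLdef
  have hL : 0 < L := Real.log_pos (by rw [lt_div_iff₀ hδ0]; linarith)
  set c := Real.sqrt (2*L) with hcdef
  have hc : 0 < c := Real.sqrt_pos.mpr (by linarith)
  have hc2 : c^2 = 2*L := Real.sq_sqrt (by linarith)
  have hkc : c ≤ k := hk
  have hk0 : 0 < k := lt_of_lt_of_le hc hkc
  have hexpL : Real.exp (-c^2/2) = 0.8 * δ := by
    rw [hc2, show -(2*L)/2 = -L by ring, Real.exp_neg, hLdef,
      Real.exp_log (by positivity)]
    rw [inv_div]
    ring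
  clear_value L
  clear_value c
  set p := σ*(k - ε/(2*k)) with hpdef
  set q := σ*(k + ε/(2*k)) with hqdef
  clear_value p
  clear_value q
  have hq0 : 0 ≤ q := by
    rw [hqdef]
    apply mul_nonneg hσ.le
    have : 0 ≤ ε/(2*k) := by positivity
    linarith
  have hqc : σ*c ≤ q := by
    rw [hqdef]
    apply mul_le_mul_of_nonneg_left _ hσ.le
    have : 0 ≤ ε/(2*k) := by positivity
    linarith
  have hq2 : σ^2 * c^2 ≤ q^2 := by nlinarith [mul_nonneg hσ.le hc.le]
  have hcosh := cosh_half_bound (ε/2) (by linarith) (by linarith)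
  by_cases hcase : ε ≤ 2*c^2
  · -- Case A
    have hpc : σ*(c - ε/(2*c)) ≤ p := by
      rw [hpdef]
      apply mul_le_mul_of_nonneg_left _ hσ.le
      have hdd : ε/(2*k) ≤ ε/(2*c) :=
        div_le_div_of_nonneg_left hε0.le (by linarith) (by linarith)
      linarith
    have hcp0 : 0 ≤ c - ε/(2*c) := by
      rw [sub_nonneg, div_le_iff₀ (by linarith)]
      nlinarith
    have hp0 : 0 ≤ p := le_trans (mul_nonneg hσ.le hcp0) hpc
    have hqc2 : σ*(c + ε/(2*c)) ≤ q := by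
      rw [hqdef]
      apply mul_le_mul_of_nonneg_left _ hσ.le
      have e1 : k + ε/(2*k) - (c + ε/(2*c)) = (k - c) * (2*k*c - ε) / (2*k*c) := by
        field_simp
        ring
      have e2 : 0 ≤ (k - c) * (2*k*c - ε) / (2*k*c) := by
        apply div_nonneg _ (by positivity)
        apply mul_nonneg (by linarith)
        nlinarith
      linarith [e1 ▸ e2]
    -- squared bounds
    have hp2 : σ^2 * (c^2 - ε) ≤ p^2 := by
      have h1 : (σ*(c - ε/(2*c)))^2 ≤ p^2 :=
        pow_le_pow_left₀ (mul_nonneg hσ.le hcp0) hpc 2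
      have hcne : c ≠ 0 := ne_of_gt hc
      have expand : (σ*(c - ε/(2*c)))^2 = σ^2*c^2 - σ^2*ε + (σ*(ε/(2*c)))^2 := by
        field_simp
        ring
      have := sq_nonneg (σ*(ε/(2*c)))
      nlinarith [h1, expand]
    have hq2' : σ^2 * (c^2 + ε) ≤ q^2 := by
      have hcq0 : 0 ≤ c + ε/(2*c) := by positivity
      have h1 : (σ*(c + ε/(2*c)))^2 ≤ q^2 :=
        pow_le_pow_left₀ (mul_nonneg hσ.le hcq0) hqc2 2
      have hcne : c ≠ 0 := ne_of_gt hc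
      have expand : (σ*(c + ε/(2*c)))^2 = σ^2*c^2 + σ^2*ε + (σ*(ε/(2*c)))^2 := by
        field_simp
        ring
      have := sq_nonneg (σ*(ε/(2*c)))
      nlinarith [h1, expand]
    have hσ2 : (0:ℝ) < 2*σ^2 := by positivity
    have e1 : Real.exp (-p^2/(2*σ^2)) ≤ Real.exp (ε/2) * (0.8*δ) := by
      calc Real.exp (-p^2/(2*σ^2)) ≤ Real.exp ((-c^2 + ε)/2) := by
            rw [Real.exp_le_exp, div_le_div_iff₀ hσ2 (by norm_num)]
            nlinarith
        _ = Real.exp (ε/2) * (0.8*δ) := by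
            rw [← hexpL, ← Real.exp_add]; ring_nf
    have e2 : Real.exp (-q^2/(2*σ^2)) ≤ Real.exp (-(ε/2)) * (0.8*δ) := by
      calc Real.exp (-q^2/(2*σ^2)) ≤ Real.exp ((-c^2 - ε)/2) := by
            rw [Real.exp_le_exp, div_le_div_iff₀ hσ2 (by norm_num)]
            nlinarith
        _ = Real.exp (-(ε/2)) * (0.8*δ) := by
            rw [← hexpL, ← Real.exp_add]; ring_nf
    calc gaussianReal a (⟨σ^2, sq_nonneg σ⟩ : ℝ≥0) (Set.Ioi (a + p)) +
          gaussianReal a (⟨σ^2, sq_nonneg σ⟩ : ℝ≥0) (Set.Iio (a - q))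
        ≤ ENNReal.ofReal (Real.exp (-p^2/(2*σ^2))/2) +
          ENNReal.ofReal (Real.exp (-q^2/(2*σ^2))/2) :=
          add_le_add (tail_Ioi_exp a σ p hσ hp0) (tail_Iio_exp a σ q hσ hq0)
      _ = ENNReal.ofReal (Real.exp (-p^2/(2*σ^2))/2 + Real.exp (-q^2/(2*σ^2))/2) :=
          (ENNReal.ofReal_add (by positivity) (by positivity)).symm
      _ ≤ ENNReal.ofReal δ := by
          apply ENNReal.ofReal_le_ofReal
          nlinarith [hcosh, Real.exp_pos (ε/2), Real.exp_pos (-(ε/2))]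
  · -- Case B
    rw [not_le] at hcase
    have hc12 : c^2 < 1/2 := by nlinarith
    have hc04 : (0.4:ℝ) ≤ c^2 := by
      have h1 : Real.log 1.25 ≤ L := by
        rw [hLdef]
        apply Real.log_le_log (by norm_num)
        rw [le_div_iff₀ hδ0]; nlinarith
      rw [hc2]; linarith [log_oneQuarter]
    have hc063 : (0.632:ℝ) ≤ c := by nlinarith
    have hδ097 : (0.97:ℝ) ≤ δ := by
      have h1 : Real.exp (-(1/4):ℝ) ≤ Real.exp (-c^2/2) := by
        rw [Real.exp_le_exp]; nlinarith
      have h2 : (0.778:ℝ) ≤ Real.exp (-(1/4):ℝ) := by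
        rw [Real.exp_neg, le_inv_comm₀ (by norm_num) (Real.exp_pos _)]
        calc Real.exp (1/4:ℝ) ≤ 1.2841 := exp_quarter_bound
          _ ≤ (0.778:ℝ)⁻¹ := by norm_num
      rw [hexpL] at h1
      nlinarith
    -- bound for the near tail
    have hmaxb : max 0 (-p) ≤ σ * ((ε - 2*c^2)/(2*c)) := by
      apply max_le
      · apply mul_nonneg hσ.le
        apply div_nonneg (by linarith) (by linarith)
      · rw [hpdef]
        have hdd : ε/(2*k) ≤ ε/(2*c) :=
          div_le_div_of_nonneg_left hε0.le (by linarith) (by linarith)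
        have hcne : c ≠ 0 := ne_of_gt hc
        have e1 : σ * ((ε - 2*c^2)/(2*c)) = σ * (ε/(2*c) - c) := by
          have e2 : (2*c^2)/(2*c) = c := by
            rw [div_eq_iff (by intro h; apply hcne; linarith [h] : (2*c) ≠ 0)]
            ring
          rw [sub_div, e2]
        rw [e1]
        have : -(σ * (k - ε/(2*k))) = σ * (ε/(2*k) - k) := by ring
        rw [this]
        apply mul_le_mul_of_nonneg_left _ hσ.le
        linarith
    have hsqrt : Real.sqrt (2*Real.pi*σ^2) = σ * Real.sqrt (2*Real.pi) := by
      rw [show 2*Real.pi*σ^2 = σ^2 * (2*Real.pi) by ring, Real.sqrt_mul (sq_nonneg σ),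
        Real.sqrt_sq hσ.le]
    have hs25 : (2.5:ℝ) ≤ Real.sqrt (2*Real.pi) := sqrt_two_pi_ge
    have hterm : max 0 (-p) * (Real.sqrt (2*Real.pi*σ^2))⁻¹ ≤ 0.064 := by
      rw [hsqrt]
      have hKpos : (0:ℝ) < σ * Real.sqrt (2*Real.pi) := by
        apply mul_pos hσ; linarith
      rw [← div_eq_mul_inv]
      rw [div_le_iff₀ hKpos]
      calc max 0 (-p) ≤ σ * ((ε - 2*c^2)/(2*c)) := hmaxb
        _ ≤ σ * 0.16 := by
            apply mul_le_mul_of_nonneg_left _ hσ.le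
            rw [div_le_iff₀ (by linarith)]
            nlinarith
        _ ≤ 0.064 * (σ * Real.sqrt (2*Real.pi)) := by nlinarith
    have hq2e : Real.exp (-q^2/(2*σ^2)) ≤ 0.8*δ := by
      rw [← hexpL, Real.exp_le_exp, div_le_div_iff₀ (by positivity) (by norm_num)]
      nlinarith
    calc gaussianReal a (⟨σ^2, sq_nonneg σ⟩ : ℝ≥0) (Set.Ioi (a + p)) +
          gaussianReal a (⟨σ^2, sq_nonneg σ⟩ : ℝ≥0) (Set.Iio (a - q))
        ≤ ENNReal.ofReal (1/2 + max 0 (-p) * (Real.sqrt (2*Real.pi*σ^2))⁻¹) +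
          ENNReal.ofReal (Real.exp (-q^2/(2*σ^2))/2) :=
          add_le_add (tail_Ioi_lin a σ p hσ) (tail_Iio_exp a σ q hσ hq0)
      _ = ENNReal.ofReal ((1/2 + max 0 (-p) * (Real.sqrt (2*Real.pi*σ^2))⁻¹) +
            Real.exp (-q^2/(2*σ^2))/2) := by
          refine (ENNReal.ofReal_add ?_ (by positivity)).symm
          have : (0:ℝ) ≤ max 0 (-p) * (Real.sqrt (2*Real.pi*σ^2))⁻¹ := by positivity
          linarith
      _ ≤ ENNReal.ofReal δ := by
          apply ENNReal.ofReal_le_ofReal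
          nlinarith [hterm, hq2e]

lemma helper_tails' (a σ ε δ k : ℝ) (hσ : 0 < σ) (hε0 : 0 < ε) (hε1 : ε < 1)
    (hδ0 : 0 < δ) (hδ1 : δ < 1) (hk : Real.sqrt (2 * Real.log (1.25/δ)) ≤ k) :
    gaussianReal a (⟨σ^2, sq_nonneg σ⟩ : ℝ≥0) (Set.Ioi (a + σ*(k + ε/(2*k)))) +
      gaussianReal a (⟨σ^2, sq_nonneg σ⟩ : ℝ≥0) (Set.Iio (a - σ*(k - ε/(2*k)))) ≤
      ENNReal.ofReal δ := by
  have h := helper_tails (-a) σ ε δ k hσ hε0 hε1 hδ0 hδ1 hk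
  rw [gr_Ioi a (a + σ*(k + ε/(2*k))) ⟨σ^2, sq_nonneg σ⟩, gr_Iio a (a - σ*(k - ε/(2*k))) ⟨σ^2, sq_nonneg σ⟩,
    show -(a + σ*(k + ε/(2*k))) = -a - σ*(k + ε/(2*k)) by ring,
    show -(a - σ*(k - ε/(2*k))) = -a + σ*(k - ε/(2*k)) by ring, add_comm]
  exact h

/-- Gaussian mechanism calibration: for a query of sensitivity `Δ`, adding Gaussian noise
with `σ ≥ Δ·√(2 log(1.25/δ))/ε` makes the privacy-loss event have probability at most `δ`:
for adjacent values `a, b` with `|a − b| ≤ Δ` and `Z ~ N(a, σ²)`,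
`P[ |log(φ_{a,σ}(Z)/φ_{b,σ}(Z))| > ε ] ≤ δ`. -/
theorem gaussian_mechanism_tail_bound (Δ a b ε δ σ : ℝ)
    (hΔ : 0 < Δ) (hab : |a - b| ≤ Δ)
    (hε : ε ∈ Set.Ioo (0 : ℝ) 1) (hδ : δ ∈ Set.Ioo (0 : ℝ) 1)
    (hσ : Δ * Real.sqrt (2 * Real.log (1.25 / δ)) / ε ≤ σ)
    (φ : ℝ → ℝ → ℝ → ℝ)
    (hφ : ∀ c s z, φ c s z =
      (1 / (s * Real.sqrt (2 * Real.pi))) * Real.exp (-(z - c) ^ 2 / (2 * s ^ 2))) :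
    gaussianReal a ⟨σ ^ 2, sq_nonneg σ⟩
        {z | ε < |Real.log (φ a σ z / φ b σ z)|} ≤ ENNReal.ofReal δ := by
  obtain ⟨hε0, hε1⟩ := hε
  obtain ⟨hδ0, hδ1⟩ := hδ
  have hL : 0 < Real.log (1.25/δ) := Real.log_pos (by rw [lt_div_iff₀ hδ0]; linarith)
  have hsq : 0 < Real.sqrt (2 * Real.log (1.25/δ)) := Real.sqrt_pos.mpr (by linarith)
  have hσ0 : 0 < σ := lt_of_lt_of_le (by positivity) hσ
  -- rewrite the log of the density ratio
  have hC : (1 : ℝ) / (σ * Real.sqrt (2 * Real.pi)) ≠ 0 := by positivity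
  have hlog : ∀ z, Real.log (φ a σ z / φ b σ z) = ((z-b)^2 - (z-a)^2)/(2*σ^2) := by
    intro z
    rw [hφ, hφ, mul_div_mul_left _ _ hC, ← Real.exp_sub, Real.log_exp]
    ring
  have hset : {z | ε < |Real.log (φ a σ z / φ b σ z)|} =
      {z | ε < |((z-b)^2 - (z-a)^2)/(2*σ^2)|} := by
    ext z; rw [Set.mem_setOf_eq, Set.mem_setOf_eq, hlog z]
  rw [hset]
  by_cases hab0 : a = b
  · have : {z : ℝ | ε < |((z-b)^2 - (z-a)^2)/(2*σ^2)|} = ∅ := by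
      ext z
      simp only [Set.mem_setOf_eq, Set.mem_empty_iff_false, iff_false, not_lt, hab0]
      rw [show ((z-b)^2 - (z-b)^2)/(2*σ^2) = 0 by ring, abs_zero]
      linarith
    rw [this, measure_empty]
    exact zero_le
  · set d := |a - b| with hddef
    have hd : 0 < d := abs_pos.mpr (sub_ne_zero.mpr hab0)
    set k := σ * ε / d with hkdef
    have hk0 : 0 < k := by positivity
    have hk : Real.sqrt (2 * Real.log (1.25/δ)) ≤ k := by
      rw [div_le_iff₀ hε0] at hσ
      rw [hkdef, le_div_iff₀ hd]
      nlinarith [hsq.le]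
    have hhalf : σ * (ε/(2*k)) = d/2 := by
      rw [hkdef]
      field_simp
    -- membership implication
    have key : ∀ z ∈ {z : ℝ | ε < |((z-b)^2 - (z-a)^2)/(2*σ^2)|},
        2*(σ*k) < |2*z - a - b| := by
      intro z hz
      rw [Set.mem_setOf_eq] at hz
      have h1 : (z-b)^2 - (z-a)^2 = (a-b) * (2*z-a-b) := by ring
      rw [h1, abs_div, abs_of_pos (by positivity : (0:ℝ) < 2*σ^2), abs_mul,
        lt_div_iff₀ (by positivity : (0:ℝ) < 2*σ^2)] at hz
      have h2 : σ * k * d = σ^2 * ε := by rw [hkdef]; field_simp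
      nlinarith [hz, abs_nonneg (2*z - a - b)]
    rcases (sub_ne_zero.mpr hab0).lt_or_gt with hba | hba
    · -- a - b < 0, i.e. a < b, d = b - a
      have hdeq : d = b - a := by rw [hddef, abs_of_neg hba]; ring
      have hsub : {z : ℝ | ε < |((z-b)^2 - (z-a)^2)/(2*σ^2)|} ⊆
          Set.Ioi (a + σ*(k + ε/(2*k))) ∪ Set.Iio (a - σ*(k - ε/(2*k))) := by
        intro z hz
        have h2 := key z hz
        rcases lt_abs.mp h2 with h3 | h3
        · left
          rw [Set.mem_Ioi]
          have e1 : σ*(k + ε/(2*k)) = σ*k + d/2 := by rw [mul_add, hhalf]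
          rw [e1, hdeq]; linarith
        · right
          rw [Set.mem_Iio]
          have e1 : σ*(k - ε/(2*k)) = σ*k - d/2 := by rw [mul_sub, hhalf]
          rw [e1, hdeq]; linarith
      calc gaussianReal a ⟨σ ^ 2, sq_nonneg σ⟩ {z | ε < |((z-b)^2 - (z-a)^2)/(2*σ^2)|}
          ≤ gaussianReal a ⟨σ ^ 2, sq_nonneg σ⟩
              (Set.Ioi (a + σ*(k + ε/(2*k))) ∪ Set.Iio (a - σ*(k - ε/(2*k)))) :=
            measure_mono hsub
        _ ≤ gaussianReal a ⟨σ ^ 2, sq_nonneg σ⟩ (Set.Ioi (a + σ*(k + ε/(2*k)))) +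
              gaussianReal a ⟨σ ^ 2, sq_nonneg σ⟩ (Set.Iio (a - σ*(k - ε/(2*k)))) :=
            measure_union_le _ _
        _ ≤ ENNReal.ofReal δ := helper_tails' a σ ε δ k hσ0 hε0 hε1 hδ0 hδ1 hk
    · -- b < a, d = a - b
      have hdeq : d = a - b := by rw [hddef, abs_of_pos hba]
      have hsub : {z : ℝ | ε < |((z-b)^2 - (z-a)^2)/(2*σ^2)|} ⊆
          Set.Ioi (a + σ*(k - ε/(2*k))) ∪ Set.Iio (a - σ*(k + ε/(2*k))) := by
        intro z hz
        have h2 := key z hz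
        rcases lt_abs.mp h2 with h3 | h3
        · left
          rw [Set.mem_Ioi]
          have e1 : σ*(k - ε/(2*k)) = σ*k - d/2 := by rw [mul_sub, hhalf]
          rw [e1, hdeq]; linarith
        · right
          rw [Set.mem_Iio]
          have e1 : σ*(k + ε/(2*k)) = σ*k + d/2 := by rw [mul_add, hhalf]
          rw [e1, hdeq]; linarith
      calc gaussianReal a ⟨σ ^ 2, sq_nonneg σ⟩ {z | ε < |((z-b)^2 - (z-a)^2)/(2*σ^2)|}
          ≤ gaussianReal a ⟨σ ^ 2, sq_nonneg σ⟩
              (Set.Ioi (a + σ*(k - ε/(2*k))) ∪ Set.Iio (a - σ*(k + ε/(2*k)))) :=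
            measure_mono hsub
        _ ≤ gaussianReal a ⟨σ ^ 2, sq_nonneg σ⟩ (Set.Ioi (a + σ*(k - ε/(2*k)))) +
              gaussianReal a ⟨σ ^ 2, sq_nonneg σ⟩ (Set.Iio (a - σ*(k + ε/(2*k)))) :=
            measure_union_le _ _
        _ ≤ ENNReal.ofReal δ := helper_tails a σ ε δ k hσ0 hε0 hε1 hδ0 hδ1 hk
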